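/- arXiv:2002.07909 — 2 statements merged into one kernel-verified Lean document; each statement's English description precedes it below -/
import Mathlib

section
/- For every t ∈ ℕ_{a+1}^b, Σ_{s=a+1}^{b} |G(t,s) − G(t−1,s)| ≤ (b−a)/(ν+1), where G is the Green's function for ∇∇_{a*}^ν x(t+1)=0, x(a)=x(b)=0 and b − a ≥ 2. -/
open Finset

/-- Generalized rising function `x^{↑μ} = Γ(x+μ)/Γ(x)` (equals 0 when `Γ x = 0`,
matching the convention `0^{↑ν} = 0`). -/
noncomputable def rise (x μ : ℝ) : ℝ := Real.Gamma (x + μ) / Real.Gamma x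

/-- Nabla (backward) difference. -/
def nabla (f : ℤ → ℝ) (t : ℤ) : ℝ := f t - f (t - 1)

/-- Caputo nabla fractional difference of order `ν ∈ (0,1)` based at `a`. -/
noncomputable def caputo (ν : ℝ) (a : ℤ) (x : ℤ → ℝ) (t : ℤ) : ℝ :=
  ∑ τ ∈ Finset.Icc (a + 1) t,
    rise ((t - τ + 1 : ℤ) : ℝ) (-ν) / Real.Gamma (1 - ν) * nabla x τ

/-- Nabla fractional sum of order `ν` based at `a`. -/
noncomputable def fsum (ν : ℝ) (a : ℤ) (f : ℤ → ℝ) (t : ℤ) : ℝ :=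
  ∑ τ ∈ Finset.Icc (a + 1) t,
    rise ((t - τ + 1 : ℤ) : ℝ) (ν - 1) / Real.Gamma ν * f τ

/-- The self-adjoint operator `L_a x(t) = ∇[p(t+1)∇_{a*}^ν x(t+1)] + q(t)x(t)`. -/
noncomputable def Lop (ν : ℝ) (a : ℤ) (p q : ℤ → ℝ) (x : ℤ → ℝ) (t : ℤ) : ℝ :=
  (p (t + 1) * caputo ν a x (t + 1) - p t * caputo ν a x t) + q t * x t

/-- Green function for the conjugate BVP `∇∇_{a*}^ν x(t+1) = 0`, `x(a)=x(b)=0`. -/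
noncomputable def Grn (ν : ℝ) (a b t s : ℤ) : ℝ :=
  if t ≤ s then
    -(rise ((b - s : ℤ) : ℝ) ν * rise ((t - a : ℤ) : ℝ) ν) /
      (Real.Gamma (1 + ν) * rise ((b - a : ℤ) : ℝ) ν)
  else
    -(rise ((b - s : ℤ) : ℝ) ν * rise ((t - a : ℤ) : ℝ) ν) /
      (Real.Gamma (1 + ν) * rise ((b - a : ℤ) : ℝ) ν)
      + rise ((t - s : ℤ) : ℝ) ν / Real.Gamma (1 + ν)

set_option maxHeartbeats 1000000

noncomputable def Ri (m : ℤ) (μ : ℝ) : ℝ := rise (m : ℝ) μ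

lemma Gamma_int_nonpos {m : ℤ} (h : m ≤ 0) : Real.Gamma (m : ℝ) = 0 := by
  obtain ⟨n, rfl⟩ := Int.exists_eq_neg_ofNat h
  push_cast
  exact Real.Gamma_neg_nat_eq_zero n

lemma Ri_nonpos {m : ℤ} (h : m ≤ 0) (μ : ℝ) : Ri m μ = 0 := by
  unfold Ri rise
  rw [Gamma_int_nonpos h, div_zero]

lemma Ri_pos {m : ℤ} (hm : 1 ≤ m) {μ : ℝ} (hμ : -1 < μ) : 0 < Ri m μ := by
  have hm' : (1:ℝ) ≤ (m:ℝ) := by exact_mod_cast hm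
  exact div_pos (Real.Gamma_pos_of_pos (by linarith)) (Real.Gamma_pos_of_pos (by linarith))

lemma Ri_succ {m : ℤ} (hm : 1 ≤ m) {μ : ℝ} (hμ : -1 < μ) :
    Ri (m + 1) μ * (m : ℝ) = Ri m μ * ((m : ℝ) + μ) := by
  have hm' : (1:ℝ) ≤ (m:ℝ) := by exact_mod_cast hm
  have h1 : Real.Gamma ((m:ℝ) + 1 + μ) = ((m:ℝ) + μ) * Real.Gamma ((m:ℝ) + μ) := by
    rw [show (m:ℝ) + 1 + μ = ((m:ℝ) + μ) + 1 by ring, Real.Gamma_add_one (by linarith)]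
  have h2 : Real.Gamma ((m:ℝ) + 1) = (m:ℝ) * Real.Gamma (m:ℝ) :=
    Real.Gamma_add_one (by linarith)
  have hΓ : Real.Gamma (m:ℝ) ≠ 0 := (Real.Gamma_pos_of_pos (by linarith)).ne'
  unfold Ri rise
  push_cast
  rw [h1, h2]
  field_simp

lemma Ri_nabla {μ : ℝ} (hμ : -1 < μ) (m : ℤ) :
    Ri m (μ + 1) - Ri (m - 1) (μ + 1) = (μ + 1) * Ri m μ := by
  rcases le_or_gt m 0 with h | h
  · rw [Ri_nonpos h, Ri_nonpos (by omega), Ri_nonpos h, sub_zero, mul_zero]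
  rcases lt_or_eq_of_le (by omega : (1:ℤ) ≤ m) with h2 | h2
  · -- m ≥ 2
    have hm2 : (2:ℝ) ≤ (m:ℝ) := by exact_mod_cast h2
    have hne1 : Real.Gamma ((m:ℝ) - 1) ≠ 0 := (Real.Gamma_pos_of_pos (by linarith)).ne'
    have hne : Real.Gamma (m:ℝ) ≠ 0 := (Real.Gamma_pos_of_pos (by linarith)).ne'
    have hΓ1 : Real.Gamma ((m:ℝ) - 1) = Real.Gamma (m:ℝ) / ((m:ℝ) - 1) := by
      rw [show Real.Gamma (m:ℝ) = Real.Gamma (((m:ℝ) - 1) + 1) by norm_num,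
        Real.Gamma_add_one (by linarith)]
      rw [mul_div_cancel_left₀ _ (by linarith : (m:ℝ) - 1 ≠ 0)]
    have hΓ2 : Real.Gamma ((m:ℝ) + (μ + 1)) = ((m:ℝ) + μ) * Real.Gamma ((m:ℝ) + μ) := by
      rw [show (m:ℝ) + (μ + 1) = ((m:ℝ) + μ) + 1 by ring, Real.Gamma_add_one (by linarith)]
    unfold Ri rise
    push_cast
    rw [hΓ2, show ((m:ℝ) - 1) + (μ + 1) = (m:ℝ) + μ by ring, hΓ1]
    have hm1 : (m:ℝ) - 1 ≠ 0 := by linarith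
    field_simp
    ring
  · -- m = 1
    obtain rfl : m = 1 := h2.symm
    rw [show (1:ℤ) - 1 = 0 by ring, Ri_nonpos (le_refl 0), sub_zero]
    unfold Ri rise
    push_cast
    rw [show (1:ℝ) + (μ + 1) = (μ + 1) + 1 by ring, show (1:ℝ) + μ = μ + 1 by ring,
      Real.Gamma_add_one (by linarith), Real.Gamma_one]
    ring

lemma Ri_shift (m : ℤ) (μ : ℝ) : Ri (m - 1) (μ + 1) = ((m : ℝ) - 1) * Ri m μ := by
  rcases le_or_gt m 0 with h | h
  · rw [Ri_nonpos (by omega), Ri_nonpos h, mul_zero]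
  rcases lt_or_eq_of_le (by omega : (1:ℤ) ≤ m) with h2 | h2
  · have hm2 : (2:ℝ) ≤ (m:ℝ) := by exact_mod_cast h2
    have hne1 : Real.Gamma ((m:ℝ) - 1) ≠ 0 := (Real.Gamma_pos_of_pos (by linarith)).ne'
    have hne : Real.Gamma (m:ℝ) ≠ 0 := (Real.Gamma_pos_of_pos (by linarith)).ne'
    have hΓ1 : Real.Gamma ((m:ℝ) - 1) = Real.Gamma (m:ℝ) / ((m:ℝ) - 1) := by
      rw [show Real.Gamma (m:ℝ) = Real.Gamma (((m:ℝ) - 1) + 1) by norm_num,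
        Real.Gamma_add_one (by linarith)]
      rw [mul_div_cancel_left₀ _ (by linarith : (m:ℝ) - 1 ≠ 0)]
    have hm1 : (m:ℝ) - 1 ≠ 0 := by linarith
    unfold Ri rise
    push_cast
    rw [show ((m:ℝ) - 1) + (μ + 1) = (m:ℝ) + μ by ring, hΓ1]
    field_simp
  · obtain rfl : m = 1 := h2.symm
    rw [show (1:ℤ) - 1 = 0 by ring, Ri_nonpos (le_refl 0)]
    push_cast
    ring

lemma Ri_sum (e c : ℤ) {μ : ℝ} (hμ : -1 < μ) :
    ∀ d : ℤ, c - 1 ≤ d →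
      ∑ s ∈ Icc c d, Ri (e - s) μ = (Ri (e - c) (μ + 1) - Ri (e - d - 1) (μ + 1)) / (μ + 1) := by
  intro d
  refine Int.le_induction (motive := fun d _ => ∑ s ∈ Icc c d, Ri (e - s) μ
    = (Ri (e - c) (μ + 1) - Ri (e - d - 1) (μ + 1)) / (μ + 1)) ?_ ?_ d
  · rw [Finset.Icc_eq_empty (by omega), Finset.sum_empty,
      show e - (c - 1) - 1 = e - c by ring, sub_self, zero_div]
  · intro d hd ih
    have hins : Icc c (d + 1) = insert (d + 1) (Icc c d) := by
      ext x; simp only [Finset.mem_Icc, Finset.mem_insert]; omega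
    have hnotmem : (d + 1) ∉ Icc c d := by simp only [Finset.mem_Icc]; omega
    rw [hins, Finset.sum_insert hnotmem, ih]
    have hnab := Ri_nabla hμ (e - d - 1)
    have h1 : (μ + 1) ≠ 0 := by linarith
    have hterm : Ri (e - (d + 1)) μ
        = (Ri (e - d - 1) (μ + 1) - Ri (e - d - 1 - 1) (μ + 1)) / (μ + 1) := by
      rw [show e - (d + 1) = e - d - 1 by ring, hnab]
      field_simp
    rw [hterm, show e - (d + 1) - 1 = e - d - 1 - 1 by ring]
    field_simp
    ring

section SignAndBounds
variable {ν : ℝ} (hν : 0 < ν) (hν1 : ν < 1)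

/-- Sign lemma: for `a ≤ s ≤ t-1`, `t ≤ b`. -/
lemma sign_aux (hν : 0 < ν) (hν1 : ν < 1) {a b t : ℤ} (ht : t ≤ b) :
    ∀ s : ℤ, a ≤ s → s ≤ t - 1 →
      Ri (b - s) ν * Ri (t - a) (ν - 1) ≤ Ri (t - s) (ν - 1) * Ri (b - a) ν := by
  intro s
  refine Int.le_induction (motive := fun s _ => s ≤ t - 1 →
    Ri (b - s) ν * Ri (t - a) (ν - 1) ≤ Ri (t - s) (ν - 1) * Ri (b - a) ν) ?_ ?_ s
  · intro _
    exact le_of_eq (mul_comm _ _)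
  · intro n hn ih hle
    have hn' : n ≤ t - 1 := by omega
    have IH := ih hn'
    -- integer facts
    have htn : 1 ≤ t - n - 1 := by omega
    have hbn : 1 ≤ b - n - 1 := by omega
    have hta : 1 ≤ t - a := by omega
    have hba : 1 ≤ b - a := by omega
    have hν' : (-1:ℝ) < ν - 1 := by linarith
    have hν'' : (-1:ℝ) < ν := by linarith
    -- recurrences
    have e1 : Ri (b - n) ν * ((b:ℝ) - n - 1) = Ri (b - n - 1) ν * (((b:ℝ) - n - 1) + ν) := by
      have := Ri_succ (m := b - n - 1) hbn hν''
      rw [show b - n - 1 + 1 = b - n by ring] at this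
      push_cast at this ⊢
      convert this using 2 <;> ring
    have e2 : Ri (t - n) (ν - 1) * ((t:ℝ) - n - 1) = Ri (t - n - 1) (ν - 1) * (((t:ℝ) - n - 1) + (ν - 1)) := by
      have := Ri_succ (m := t - n - 1) htn hν'
      rw [show t - n - 1 + 1 = t - n by ring] at this
      push_cast at this ⊢
      convert this using 2 <;> ring
    -- positivity
    have hX : 0 < Ri (t - n - 1) (ν - 1) := Ri_pos htn hν'
    have hY : 0 < Ri (b - n - 1) ν := Ri_pos hbn hν''
    have hP : 0 < Ri (t - a) (ν - 1) := Ri_pos hta hν'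
    have hQ : 0 < Ri (b - a) ν := Ri_pos hba hν''
    have htn' : (1:ℝ) ≤ (t:ℝ) - n - 1 := by exact_mod_cast htn
    have hbn' : (1:ℝ) ≤ (b:ℝ) - n - 1 := by exact_mod_cast hbn
    rw [show b - (n + 1) = b - n - 1 by ring, show t - (n + 1) = t - n - 1 by ring]
    -- goal : Ri (b-n-1) ν * Ri (t-a) (ν-1) ≤ Ri (t-n-1) (ν-1) * Ri (b-a) ν
    set X := Ri (t - n - 1) (ν - 1)
    set Y := Ri (b - n - 1) ν
    set P := Ri (t - a) (ν - 1)
    set Q := Ri (b - a) ν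
    have hden : (0:ℝ) < (((b:ℝ) - n - 1) + ν) * ((t:ℝ) - n - 1) := by positivity
    rw [← mul_le_mul_iff_of_pos_right hden]
    calc Y * P * ((((b:ℝ) - n - 1) + ν) * ((t:ℝ) - n - 1))
        = (Ri (b - n) ν * ((b:ℝ) - n - 1)) * P * ((t:ℝ) - n - 1) := by rw [e1]; ring
      _ = (Ri (b - n) ν * P) * (((b:ℝ) - n - 1) * ((t:ℝ) - n - 1)) := by ring
      _ ≤ (Ri (t - n) (ν - 1) * Q) * (((b:ℝ) - n - 1) * ((t:ℝ) - n - 1)) := by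
          apply mul_le_mul_of_nonneg_right IH
          positivity
      _ = (Ri (t - n) (ν - 1) * ((t:ℝ) - n - 1)) * Q * ((b:ℝ) - n - 1) := by ring
      _ = (X * (((t:ℝ) - n - 1) + (ν - 1))) * Q * ((b:ℝ) - n - 1) := by rw [e2]
      _ ≤ X * Q * ((((b:ℝ) - n - 1) + ν) * ((t:ℝ) - n - 1)) := by
          nlinarith [mul_nonneg (mul_nonneg (mul_pos hX hQ).le
              (by linarith : (0:ℝ) ≤ 1 - ν)) (by linarith : (0:ℝ) ≤ (b:ℝ) - n - 1),
            mul_nonneg (mul_nonneg (mul_pos hX hQ).le hν.le)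
              (by linarith : (0:ℝ) ≤ (t:ℝ) - n - 1)]

/-- `B` bound: `Ri (b-t) (ν+1) ≤ (b-t) * Ri (b-a) ν`. -/
lemma B_bound (hν : 0 < ν) {a b : ℤ} (hab : a + 2 ≤ b) :
    ∀ t : ℤ, a + 1 ≤ t → t ≤ b → Ri (b - t) (ν + 1) ≤ ((b:ℝ) - t) * Ri (b - a) ν := by
  intro t
  refine Int.le_induction (motive := fun t _ => t ≤ b →
    Ri (b - t) (ν + 1) ≤ ((b:ℝ) - t) * Ri (b - a) ν) ?_ ?_ t
  · intro _
    have := Ri_shift (b - a) ν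
    rw [show b - a - 1 = b - (a + 1) by ring] at this
    rw [this]
    push_cast
    apply le_of_eq
    ring
  · intro t ht ih hle
    have IH := ih (by omega)
    have hQ : 0 < Ri (b - a) ν := Ri_pos (by omega) (by linarith)
    rcases lt_or_eq_of_le (by omega : t + 1 ≤ b) with h2 | h2
    · -- b - t - 1 ≥ 1
      have hbt1 : 1 ≤ b - t - 1 := by omega
      have e1 : Ri (b - t) (ν + 1) * ((b:ℝ) - t - 1)
          = Ri (b - t - 1) (ν + 1) * (((b:ℝ) - t - 1) + (ν + 1)) := by
        have := Ri_succ (m := b - t - 1) hbt1 (by linarith : (-1:ℝ) < ν + 1)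
        rw [show b - t - 1 + 1 = b - t by ring] at this
        push_cast at this ⊢
        convert this using 2 <;> ring
      have hbt1' : (1:ℝ) ≤ (b:ℝ) - t - 1 := by exact_mod_cast hbt1
      have hW : 0 ≤ Ri (b - t - 1) (ν + 1) := (Ri_pos hbt1 (by linarith)).le
      rw [show b - (t + 1) = b - t - 1 by ring]
      have hden : (0:ℝ) < ((b:ℝ) - t - 1) + (ν + 1) := by linarith
      rw [← mul_le_mul_iff_of_pos_right hden]
      push_cast
      calc Ri (b - t - 1) (ν + 1) * (((b:ℝ) - t - 1) + (ν + 1))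
          = Ri (b - t) (ν + 1) * ((b:ℝ) - t - 1) := e1.symm
        _ ≤ (((b:ℝ) - t) * Ri (b - a) ν) * ((b:ℝ) - t - 1) := by
            apply mul_le_mul_of_nonneg_right IH (by linarith)
        _ ≤ ((b:ℝ) - (t + 1)) * Ri (b - a) ν * (((b:ℝ) - t - 1) + (ν + 1)) := by
            nlinarith [mul_nonneg hQ.le (by linarith : (0:ℝ) ≤ (b:ℝ) - t - 1)]
    · -- t + 1 = b
      rw [show b - (t+1) = 0 by omega, Ri_nonpos (le_refl 0)]
      have hb : (b:ℝ) = (t:ℝ) + 1 := by exact_mod_cast h2.symm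
      push_cast
      rw [hb]
      norm_num

/-- `C` bound: `Ri m ν ≤ (1 + ν (m-1)) Γ(ν+1)`. -/
lemma C_bound (hν : 0 < ν) (hν1 : ν < 1) :
    ∀ m : ℤ, 1 ≤ m → Ri m ν ≤ (1 + ν * ((m:ℝ) - 1)) * Real.Gamma (ν + 1) := by
  intro m
  refine Int.le_induction (motive := fun m _ => Ri m ν ≤ (1 + ν * ((m:ℝ) - 1)) * Real.Gamma (ν + 1)) ?_ ?_ m
  · unfold Ri rise
    push_cast
    rw [Real.Gamma_one, show (1:ℝ) + ν = ν + 1 by ring]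
    apply le_of_eq
    ring
  · intro m hm ih
    have hm' : (1:ℝ) ≤ (m:ℝ) := by exact_mod_cast hm
    have e1 := Ri_succ (m := m) hm (by linarith : (-1:ℝ) < ν)
    have hΓp : 0 < Real.Gamma (ν + 1) := Real.Gamma_pos_of_pos (by linarith)
    have hR : 0 ≤ Ri m ν := (Ri_pos hm (by linarith)).le
    have hmpos : (0:ℝ) < (m:ℝ) := by linarith
    rw [← mul_le_mul_iff_of_pos_right hmpos]
    push_cast
    calc Ri (m + 1) ν * (m:ℝ) = Ri m ν * ((m:ℝ) + ν) := e1
      _ ≤ ((1 + ν * ((m:ℝ) - 1)) * Real.Gamma (ν + 1)) * ((m:ℝ) + ν) := by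
          apply mul_le_mul_of_nonneg_right ih (by linarith)
      _ ≤ (1 + ν * ((m:ℝ) + 1 - 1)) * Real.Gamma (ν + 1) * (m:ℝ) := by
          nlinarith [mul_nonneg (mul_nonneg (mul_nonneg hν.le
            (by linarith : (0:ℝ) ≤ 1 - ν)) (by linarith : (0:ℝ) ≤ (m:ℝ) - 1)) hΓp.le]

end SignAndBounds

lemma Ri_nonneg {μ : ℝ} (hμ : -1 < μ) (m : ℤ) : 0 ≤ Ri m μ := by
  rcases le_or_gt m 0 with h | h
  · rw [Ri_nonpos h]
  · exact (Ri_pos h hμ).le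

theorem greens_function_nabla_abs_sum (ν : ℝ) (hν : 0 < ν) (hν1 : ν < 1) (a b : ℤ)
    (hab : a + 2 ≤ b) :
    ∀ t : ℤ, a + 1 ≤ t → t ≤ b →
      (∑ s ∈ Finset.Icc (a + 1) b, |Grn ν a b t s - Grn ν a b (t - 1) s|) ≤
        ((b : ℝ) - a) / (ν + 1) := by
  intro t ht1 ht2
  have hν' : (-1:ℝ) < ν - 1 := by linarith
  have hν'' : (-1:ℝ) < ν := by linarith
  have hΓν : (0:ℝ) < Real.Gamma ν := Real.Gamma_pos_of_pos hν
  have hΓp : (0:ℝ) < Real.Gamma (ν + 1) := Real.Gamma_pos_of_pos (by linarith)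
  have hΓrec : Real.Gamma (1 + ν) = ν * Real.Gamma ν := by
    rw [show (1:ℝ) + ν = ν + 1 by ring]; exact Real.Gamma_add_one hν.ne'
  have hQ : (0:ℝ) < Ri (b - a) ν := Ri_pos (by omega) hν''
  have hP : (0:ℝ) < Ri (t - a) (ν - 1) := Ri_pos (by omega) hν'
  have hQne : Ri (b - a) ν ≠ 0 := hQ.ne'
  have hΓne : Real.Gamma ν ≠ 0 := hΓν.ne'
  have nab : ∀ m : ℤ, Ri m ν - Ri (m - 1) ν = ν * Ri m (ν - 1) := by
    intro m
    have h := Ri_nabla hν' m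
    rw [show ν - 1 + 1 = ν by ring] at h
    exact h
  have h0 : ∀ (m : ℤ) (μ : ℝ), rise ((m : ℤ) : ℝ) μ = Ri m μ := fun m μ => rfl
  have hGrn : ∀ t s : ℤ, Grn ν a b t s =
      -(Ri (b - s) ν * Ri (t - a) ν) / (Real.Gamma (1 + ν) * Ri (b - a) ν)
        + Ri (t - s) ν / Real.Gamma (1 + ν) := by
    intro t s
    simp only [Grn]
    split_ifs with h
    · rw [h0 (b - s), h0 (t - a), h0 (b - a), Ri_nonpos (by omega : t - s ≤ 0), zero_div,
        add_zero]
    · rw [h0 (b - s), h0 (t - a), h0 (b - a), h0 (t - s)]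
  have hD : ∀ s : ℤ, Grn ν a b t s - Grn ν a b (t - 1) s
      = (Ri (t - s) (ν - 1) - Ri (b - s) ν * Ri (t - a) (ν - 1) / Ri (b - a) ν)
        / Real.Gamma ν := by
    intro s
    rw [hGrn t s, hGrn (t - 1) s, hΓrec,
      show t - 1 - s = t - s - 1 by ring, show t - 1 - a = t - a - 1 by ring]
    have h1 := nab (t - s)
    have h2 := nab (t - a)
    have expand : (-(Ri (b - s) ν * Ri (t - a) ν) / (ν * Real.Gamma ν * Ri (b - a) ν)
          + Ri (t - s) ν / (ν * Real.Gamma ν))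
        - (-(Ri (b - s) ν * Ri (t - a - 1) ν) / (ν * Real.Gamma ν * Ri (b - a) ν)
          + Ri (t - s - 1) ν / (ν * Real.Gamma ν))
        = ((Ri (t - s) ν - Ri (t - s - 1) ν) * Ri (b - a) ν
            - Ri (b - s) ν * (Ri (t - a) ν - Ri (t - a - 1) ν))
          / (ν * Real.Gamma ν * Ri (b - a) ν) := by
      field_simp
      ring
    rw [expand, h1, h2]
    field_simp
  set K := Ri (t - a) (ν - 1) / (Ri (b - a) ν * Real.Gamma ν) with hKdef
  have hpart2 : ∀ s ∈ Icc t b, |Grn ν a b t s - Grn ν a b (t - 1) s| = Ri (b - s) ν * K := by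
    intro s hs
    rw [Finset.mem_Icc] at hs
    rw [hD s, Ri_nonpos (show t - s ≤ 0 by omega)]
    have hRb : 0 ≤ Ri (b - s) ν := Ri_nonneg hν'' _
    have hle : ((0:ℝ) - Ri (b - s) ν * Ri (t - a) (ν - 1) / Ri (b - a) ν) / Real.Gamma ν ≤ 0 := by
      apply div_nonpos_of_nonpos_of_nonneg _ hΓν.le
      rw [zero_sub, neg_nonpos]
      positivity
    rw [abs_of_nonpos hle, hKdef]
    field_simp
    ring
  have hpart1 : ∀ s ∈ Icc (a + 1) (t - 1), |Grn ν a b t s - Grn ν a b (t - 1) s|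
      = Ri (t - s) (ν - 1) * (1 / Real.Gamma ν) - Ri (b - s) ν * K := by
    intro s hs
    rw [Finset.mem_Icc] at hs
    have hsign := sign_aux (a := a) (b := b) hν hν1 ht2 s (by omega) (by omega)
    have hge : 0 ≤ (Ri (t - s) (ν - 1)
        - Ri (b - s) ν * Ri (t - a) (ν - 1) / Ri (b - a) ν) / Real.Gamma ν := by
      apply div_nonneg _ hΓν.le
      rw [sub_nonneg, div_le_iff₀ hQ]
      linarith [hsign]
    rw [hD s, abs_of_nonneg hge, hKdef]
    field_simp
  have hsplit : Icc (a + 1) b = Icc (a + 1) (t - 1) ∪ Icc t b := by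
    ext x; simp only [Finset.mem_Icc, Finset.mem_union]; omega
  have hdisj : Disjoint (Icc (a + 1) (t - 1)) (Icc t b) := by
    rw [Finset.disjoint_left]
    intro x hx hx'
    rw [Finset.mem_Icc] at hx hx'
    omega
  have hT1 : ∑ s ∈ Icc (a + 1) (t - 1), Ri (t - s) (ν - 1) = Ri (t - a - 1) ν / ν := by
    rw [Ri_sum t (a + 1) hν' (t - 1) (by omega)]
    rw [show ν - 1 + 1 = ν by ring, show t - (t - 1) - 1 = 0 by ring,
      Ri_nonpos (le_refl 0), show t - (a + 1) = t - a - 1 by ring, sub_zero]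
  have hT2 : ∑ s ∈ Icc (a + 1) (t - 1), Ri (b - s) ν
      = (Ri (b - a - 1) (ν + 1) - Ri (b - t) (ν + 1)) / (ν + 1) := by
    rw [Ri_sum b (a + 1) hν'' (t - 1) (by omega), show b - (a + 1) = b - a - 1 by ring,
      show b - (t - 1) - 1 = b - t by ring]
  have hT3 : ∑ s ∈ Icc t b, Ri (b - s) ν = Ri (b - t) (ν + 1) / (ν + 1) := by
    rw [Ri_sum b t hν'' b (by omega), show b - b - 1 = -1 by ring,
      Ri_nonpos (show (-1:ℤ) ≤ 0 by norm_num), sub_zero]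
  have hRn1 : Ri (b - a - 1) (ν + 1) = ((b:ℝ) - a - 1) * Ri (b - a) ν := by
    have h := Ri_shift (b - a) ν
    push_cast at h
    exact h
  have hR1P : Ri (t - a - 1) ν = ((t:ℝ) - a - 1) * Ri (t - a) (ν - 1) := by
    have h := Ri_shift (t - a) (ν - 1)
    rw [show ν - 1 + 1 = ν by ring] at h
    push_cast at h
    exact h
  have hW0 : 0 ≤ Ri (b - t) (ν + 1) := Ri_nonneg (by linarith) _
  have hWB : Ri (b - t) (ν + 1) ≤ ((b:ℝ) - t) * Ri (b - a) ν := B_bound hν hab t ht1 ht2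
  -- the sum in closed form
  have hS : (∑ s ∈ Finset.Icc (a + 1) b, |Grn ν a b t s - Grn ν a b (t - 1) s|)
      = (((t:ℝ) - a - 1) * Ri (t - a) (ν - 1) * (ν + 1) * Ri (b - a) ν
          + (2 * Ri (b - t) (ν + 1) - ((b:ℝ) - a - 1) * Ri (b - a) ν) * Ri (t - a) (ν - 1) * ν)
        / (ν * (ν + 1) * Ri (b - a) ν * Real.Gamma ν) := by
    rw [hsplit, Finset.sum_union hdisj, Finset.sum_congr rfl hpart1,
      Finset.sum_congr rfl hpart2, Finset.sum_sub_distrib, ← Finset.sum_mul, ← Finset.sum_mul,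
      ← Finset.sum_mul, hT1, hT2, hT3, hRn1, hR1P, hKdef]
    have hν1' : (ν:ℝ) + 1 ≠ 0 := by linarith
    field_simp
    ring
  -- the main estimate, numerator form
  have hmain : ((t:ℝ) - a - 1) * Ri (t - a) (ν - 1) * (ν + 1) * Ri (b - a) ν
      + (2 * Ri (b - t) (ν + 1) - ((b:ℝ) - a - 1) * Ri (b - a) ν) * Ri (t - a) (ν - 1) * ν
      ≤ ((b:ℝ) - a) * (ν * Ri (b - a) ν * Real.Gamma ν) := by
    rcases lt_or_eq_of_le ht1 with hj2 | hj1
    · -- a + 2 ≤ t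
      have hjj2 : (2:ℝ) ≤ (t:ℝ) - a := by
        have : (a:ℝ) + 2 ≤ (t:ℝ) := by exact_mod_cast (by omega : a + 2 ≤ t)
        linarith
      have hnn2 : (2:ℝ) ≤ (b:ℝ) - a := by
        have : (a:ℝ) + 2 ≤ (b:ℝ) := by exact_mod_cast hab
        linarith
      have hjn : (t:ℝ) ≤ (b:ℝ) := by exact_mod_cast ht2
      have hCb := C_bound hν hν1 (t - a - 1) (by omega)
      push_cast at hCb
      rw [hR1P, Real.Gamma_add_one hν.ne'] at hCb
      -- hCb : ((t:ℝ)-a-1) * P ≤ (1 + ν*((t:ℝ)-a-1-1)) * (ν * Γν)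
      set P := Ri (t - a) (ν - 1)
      set Q := Ri (b - a) ν
      set W := Ri (b - t) (ν + 1)
      set G := Real.Gamma ν
      set jj := (t:ℝ) - a with hjjdef
      set nn := (b:ℝ) - a with hnndef
      have hWB' : W ≤ (nn - jj) * Q := by
        have : (nn - jj) = (b:ℝ) - t := by rw [hjjdef, hnndef]; ring
        rw [this]; exact hWB
      have hbr : 0 ≤ (jj - 1) + ν * (nn - jj) := by
        have h1 : 0 ≤ ν * (nn - jj) := mul_nonneg hν.le (by linarith)
        linarith
      have hpoly : (1 + ν * (jj - 2)) * ((jj - 1) + ν * (nn - jj)) ≤ nn * (jj - 1) := by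
        nlinarith [mul_nonneg (by linarith : (0:ℝ) ≤ 1 - ν) (by linarith : (0:ℝ) ≤ nn - jj),
          mul_nonneg (mul_nonneg (by linarith : (0:ℝ) ≤ 1 - ν) (by linarith : (0:ℝ) ≤ jj - 1))
            (by linarith : (0:ℝ) ≤ jj - 2),
          mul_nonneg (mul_nonneg (mul_nonneg (by linarith : (0:ℝ) ≤ 1 - ν)
            (by linarith : (0:ℝ) ≤ 1 + ν)) (by linarith : (0:ℝ) ≤ jj - 2))
            (by linarith : (0:ℝ) ≤ nn - jj)]
      have step1 : P * ((jj - 1) * ((jj - 1) + ν * (nn - jj)))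
          ≤ (1 + ν * (jj - 2)) * (ν * G) * ((jj - 1) + ν * (nn - jj)) := by
        calc P * ((jj - 1) * ((jj - 1) + ν * (nn - jj)))
            = ((jj - 1) * P) * ((jj - 1) + ν * (nn - jj)) := by ring
          _ ≤ (1 + ν * (jj - 2)) * (ν * G) * ((jj - 1) + ν * (nn - jj)) := by
              apply mul_le_mul_of_nonneg_right _ hbr
              have hGnn : 0 ≤ ν * G := by positivity
              linarith [hCb]
      have step2 : (1 + ν * (jj - 2)) * (ν * G) * ((jj - 1) + ν * (nn - jj))
          ≤ nn * ν * G * (jj - 1) := by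
        have hng : 0 ≤ ν * G := mul_nonneg hν.le (by positivity)
        have h5 := mul_le_mul_of_nonneg_left hpoly hng
        nlinarith [h5]
      have step3 : P * ((jj - 1) + ν * (nn - jj)) ≤ nn * ν * G := by
        have hjpos : (0:ℝ) < jj - 1 := by linarith
        rw [← mul_le_mul_iff_of_pos_right hjpos]
        calc P * ((jj - 1) + ν * (nn - jj)) * (jj - 1)
            = P * ((jj - 1) * ((jj - 1) + ν * (nn - jj))) := by ring
          _ ≤ (1 + ν * (jj - 2)) * (ν * G) * ((jj - 1) + ν * (nn - jj)) := step1
          _ ≤ nn * ν * G * (jj - 1) := step2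
      -- final
      have h1 : 0 ≤ P * ν * ((nn - jj) * Q - W) :=
        mul_nonneg (mul_nonneg hP.le hν.le) (by linarith)
      have h2 := mul_le_mul_of_nonneg_right step3 hQ.le
      nlinarith [h1, h2]

    · -- t = a + 1
      have ht' : a + 1 = t := hj1
      have hW : Ri (b - t) (ν + 1) = ((b:ℝ) - a - 1) * Ri (b - a) ν := by
        rw [show b - t = b - a - 1 by omega]
        exact hRn1
      have hP1 : Ri (t - a) (ν - 1) = Real.Gamma ν := by
        rw [show t - a = 1 by omega]
        unfold Ri rise
        push_cast
        rw [show (1:ℝ) + (ν - 1) = ν by ring, Real.Gamma_one, div_one]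
      have hjj : (t:ℝ) - a - 1 = 0 := by
        have : (t:ℝ) = (a:ℝ) + 1 := by exact_mod_cast ht'.symm
        linarith
      have hnn2 : (2:ℝ) ≤ (b:ℝ) - a := by
        have : (a:ℝ) + 2 ≤ (b:ℝ) := by exact_mod_cast hab
        linarith
      rw [hW, hP1, hjj]
      have hqg : 0 ≤ Ri (b - a) ν * Real.Gamma ν := by positivity
      nlinarith [mul_nonneg (mul_nonneg hQ.le hΓν.le) hν.le]
  rw [hS, div_le_div_iff₀ (by positivity) (by linarith : (0:ℝ) < ν + 1)]
  have hfin := mul_le_mul_of_nonneg_right hmain (by linarith : (0:ℝ) ≤ ν + 1)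
  nlinarith [hfin]
end

section
/- The unique solution of the IVP ∇∇_{0*}^{0.6} x(t+1) = t for t ∈ ℕ_1, with x(0) = 0 and ∇x(1) = 0, is x(t) = (t−1)^{↑2.6}/Γ(3.6). -/
open Finset

noncomputable def K (α : ℝ) : ℕ → ℝ
  | 0 => 1
  | (n+1) => K α n * ((n : ℝ) + α) / ((n : ℝ) + 1)

lemma K_zero (α : ℝ) : K α 0 = 1 := rfl
lemma K_succ (α : ℝ) (n : ℕ) : K α (n+1) = K α n * ((n : ℝ) + α) / ((n : ℝ) + 1) := rfl

lemma Kmul (α : ℝ) : ∀ n : ℕ, α * K (α+1) n = ((n : ℝ) + α) * K α n := by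
  intro n
  induction n with
  | zero => simp [K_zero]
  | succ n ih =>
    have hn : ((n:ℝ)+1) ≠ 0 := by positivity
    rw [K_succ, K_succ]
    push_cast
    rw [mul_div_assoc', mul_div_assoc', div_eq_div_iff hn hn]
    linear_combination ((n:ℝ) + 1 + α) * ((n:ℝ)+1) * ih

lemma Ksub (α : ℝ) (n : ℕ) : K (α+1) (n+1) - K (α+1) n = K α (n+1) := by
  have h := Kmul α n
  have hn : ((n:ℝ) + 1) ≠ 0 := by positivity
  rw [K_succ, K_succ]
  rw [div_sub' hn, div_eq_div_iff hn hn]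
  linear_combination ((n:ℝ)+1) * h

lemma Kconv (α β : ℝ) : ∀ N : ℕ,
    ∑ m ∈ range (N+1), K α (N - m) * K β m = K (α+β) N := by
  intro N
  induction N with
  | zero => simp [K_zero]
  | succ N ih =>
    have hN1 : ((N:ℝ) + 1) ≠ 0 := by positivity
    have key : ((N:ℝ) + 1) * (∑ m ∈ range (N+2), K α (N+1 - m) * K β m)
        = ((N:ℝ) + α + β) * ∑ m ∈ range (N+1), K α (N - m) * K β m := by
      have split : ∀ m ∈ range (N+2), ((N:ℝ)+1) * (K α (N+1-m) * K β m)
          = (((N:ℝ)+1-m) * K α (N+1-m)) * K β m + K α (N+1-m) * ((m:ℝ) * K β m) := by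
        intro m hm; ring
      rw [Finset.mul_sum, Finset.sum_congr rfl split, Finset.sum_add_distrib]
      have e1 : ∑ m ∈ range (N+2), (((N:ℝ)+1-m) * K α (N+1-m)) * K β m
          = ∑ m ∈ range (N+1), (((N:ℝ)-m+α) * K α (N-m)) * K β m := by
        rw [Finset.sum_range_succ]
        rw [show ((N:ℝ)+1-((N+1:ℕ):ℝ)) = 0 by push_cast; ring]
        rw [zero_mul, zero_mul, add_zero]
        apply Finset.sum_congr rfl
        intro m hm
        have hm' : m ≤ N := by simpa [Nat.lt_succ_iff] using hm
        have hsub : N + 1 - m = (N - m) + 1 := by omega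
        have hNm : ((N - m : ℕ) : ℝ) = (N : ℝ) - m := by push_cast [hm']; ring
        rw [hsub, K_succ, hNm]
        have hd : ((N:ℝ) - m + 1) ≠ 0 := by
          have : (m:ℝ) ≤ (N:ℝ) := by exact_mod_cast hm'
          nlinarith
        field_simp
        ring
      have e2 : ∑ m ∈ range (N+2), K α (N+1-m) * ((m:ℝ) * K β m)
          = ∑ m ∈ range (N+1), K α (N-m) * (((m:ℝ)+β) * K β m) := by
        rw [Finset.sum_range_succ']
        simp only [Nat.cast_zero, zero_mul, mul_zero, add_zero]
        apply Finset.sum_congr rfl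
        intro m hm
        have hsub : N + 1 - (m + 1) = N - m := by omega
        rw [hsub, K_succ]
        have hd : ((m:ℝ) + 1) ≠ 0 := by positivity
        push_cast
        rw [mul_div_assoc]
        rw [show ((m:ℝ)+1) * (K β m * (((m:ℝ)+β) / ((m:ℝ)+1)))
            = K β m * (((m:ℝ)+β) * (((m:ℝ)+1) / ((m:ℝ)+1))) by ring]
        rw [div_self hd]
        ring
      rw [e1, e2, ← Finset.sum_add_distrib, Finset.mul_sum]
      apply Finset.sum_congr rfl
      intro m hm; ring
    rw [K_succ, ← ih, eq_div_iff hN1]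
    linear_combination key

lemma K3 : ∀ n : ℕ, K 3 n = ((n:ℝ)+1)*((n:ℝ)+2)/2 := by
  intro n
  induction n with
  | zero => norm_num [K_zero]
  | succ n ih =>
    rw [K_succ, ih]
    have : ((n:ℝ)+1) ≠ 0 := by positivity
    field_simp
    push_cast
    ring

lemma KGamma (α : ℝ) (hα : 0 < α) : ∀ n : ℕ,
    Real.Gamma ((n:ℝ) + α) = K α n * (n.factorial : ℝ) * Real.Gamma α := by
  intro n
  induction n with
  | zero => simp [K_zero]
  | succ n ih =>
    have h2 : ((n:ℝ) + α) ≠ 0 := by positivity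
    rw [show (((n+1:ℕ)):ℝ) + α = ((n:ℝ)+α)+1 by push_cast; ring,
      Real.Gamma_add_one h2, ih, K_succ, Nat.factorial_succ]
    have hn : ((n:ℝ)+1) ≠ 0 := by positivity
    push_cast
    field_simp

lemma riseK (α : ℝ) (hα : 0 < α) (n : ℕ) :
    rise ((n:ℝ)+1) (α-1) / Real.Gamma α = K α n := by
  have h1 : ((n:ℝ) + 1 + (α - 1)) = (n:ℝ) + α := by ring
  rw [rise, h1, KGamma α hα n]
  rw [show ((n:ℝ)+1) = ((n:ℕ):ℝ) + 1 by norm_num, Real.Gamma_nat_eq_factorial]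
  have hf : (n.factorial : ℝ) ≠ 0 := by positivity
  have hg : Real.Gamma α ≠ 0 := (Real.Gamma_pos_of_pos hα).ne'
  field_simp

lemma sum_Icc_int (f : ℤ → ℝ) : ∀ N : ℕ,
    ∑ τ ∈ Finset.Icc (1:ℤ) (N:ℤ), f τ = ∑ j ∈ Finset.range N, f ((j:ℤ)+1) := by
  intro N
  induction N with
  | zero => simp
  | succ N ih =>
    have hins : Finset.Icc (1:ℤ) ((N+1:ℕ):ℤ) = insert ((N:ℤ)+1) (Finset.Icc 1 (N:ℤ)) := by
      ext z
      simp only [Finset.mem_Icc, Finset.mem_insert]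
      omega
    rw [hins, Finset.sum_insert (by simp), ih, Finset.sum_range_succ]
    ring

lemma caputoK (x : ℤ → ℝ) (N : ℕ) :
    caputo 0.6 0 x (N:ℤ) = ∑ j ∈ range N, K 0.4 (N - 1 - j) * nabla x ((j:ℤ)+1) := by
  rw [caputo, zero_add, sum_Icc_int]
  apply Finset.sum_congr rfl
  intro j hj
  have hj' : j < N := Finset.mem_range.mp hj
  have hc : ((N:ℤ) - ((j:ℤ)+1) + 1) = ((N - 1 - j : ℕ) : ℤ) + 1 := by omega
  rw [hc]
  have : (((N - 1 - j : ℕ) : ℤ) + 1 : ℤ) = (((N - 1 - j : ℕ) : ℝ) + 1 : ℝ) := by push_cast; ring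
  rw [show ((((N - 1 - j : ℕ) : ℤ) + 1 : ℤ) : ℝ) = ((N - 1 - j : ℕ) : ℝ) + 1 by push_cast; ring]
  rw [show (-(0.6:ℝ)) = (0.4:ℝ) - 1 by norm_num, show (1:ℝ) - 0.6 = 0.4 by norm_num]
  rw [riseK 0.4 (by norm_num)]

noncomputable def Y : ℤ → ℝ := fun t => rise ((t - 1 : ℤ) : ℝ) 2.6 / Real.Gamma 3.6

lemma Y0 : Y 0 = 0 := by
  have h : Real.Gamma (-1 : ℝ) = 0 := by
    simpa using Real.Gamma_neg_nat_eq_zero 1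
  rw [Y, rise, show (((0:ℤ)-1:ℤ):ℝ) = (-1:ℝ) by norm_num, h, div_zero, zero_div]

lemma Y1 : Y 1 = 0 := by
  rw [Y, rise, show (((1:ℤ)-1:ℤ):ℝ) = (0:ℝ) by norm_num, Real.Gamma_zero, div_zero, zero_div]

lemma Y2 (n : ℕ) : Y ((n:ℤ)+2) = K 3.6 n := by
  have h : (((n:ℤ)+2-1 : ℤ) : ℝ) = (n:ℝ)+1 := by push_cast; ring
  rw [Y, h, show (2.6:ℝ) = 3.6 - 1 by norm_num, riseK 3.6 (by norm_num)]

lemma nablaY : ∀ j : ℕ, nabla Y ((j:ℤ)+1) = if j = 0 then 0 else K 2.6 (j-1) := by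
  intro j
  match j with
  | 0 => simp [nabla, Y0, Y1]
  | 1 =>
    have h1 : nabla Y (((1:ℕ):ℤ)+1) = Y (((0:ℕ):ℤ)+2) - Y 1 := by
      rw [nabla]; norm_num
    rw [h1, Y2 0, Y1, K_zero]
    norm_num [K_zero]
  | (m+2) =>
    have h1 : nabla Y (((m+2:ℕ):ℤ)+1) = Y (((m+1:ℕ):ℤ)+2) - Y (((m:ℕ):ℤ)+2) := by
      rw [nabla, show ((m+2:ℕ):ℤ)+1 = ((m+1:ℕ):ℤ)+2 by push_cast; ring,
        show ((m+1:ℕ):ℤ)+2-1 = ((m:ℕ):ℤ)+2 by push_cast; ring]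
    rw [h1, Y2, Y2]
    have := Ksub 2.6 m
    rw [show (2.6:ℝ)+1 = 3.6 by norm_num] at this
    simp only [show m+2 ≠ 0 from by omega, if_neg, Nat.add_sub_cancel]
    rw [show m+2-1 = m+1 by omega]
    exact this

lemma capY (N : ℕ) : caputo 0.6 0 Y (((N:ℤ))+2) = ((N:ℝ)+1)*((N:ℝ)+2)/2 := by
  have h := caputoK Y (N+2)
  rw [show (((N+2:ℕ)):ℤ) = (N:ℤ)+2 by push_cast; ring] at h
  rw [h, Finset.sum_range_succ']
  have hz : nabla Y ((0:ℤ)+1) = 0 := by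
    have := nablaY 0
    simpa using this
  rw [show ((0:ℕ):ℤ) = (0:ℤ) by norm_num] at *
  rw [hz, mul_zero, add_zero]
  have : ∀ j ∈ range (N+1), K 0.4 (N+2-1-(j+1)) * nabla Y (((j+1:ℕ):ℤ)+1)
      = K 0.4 (N - j) * K 2.6 j := by
    intro j hj
    have h2 : nabla Y (((j+1:ℕ):ℤ)+1) = K 2.6 j := by
      have := nablaY (j+1)
      rw [if_neg (by omega)] at this
      simpa using this
    rw [show N+2-1-(j+1) = N - j by omega, h2]
  rw [Finset.sum_congr rfl this, Kconv]
  rw [show (0.4:ℝ)+2.6 = 3 by norm_num, K3]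


theorem example_selfadjoint_ivp (x : ℤ → ℝ) (h0 : x 0 = 0) (h1 : nabla x 1 = 0)
    (heq : ∀ t : ℤ, 1 ≤ t →
      caputo 0.6 0 x (t + 1) - caputo 0.6 0 x t = (t : ℝ)) :
    ∀ t : ℤ, 0 ≤ t → x t = rise ((t - 1 : ℤ) : ℝ) 2.6 / Real.Gamma 3.6 := by
  -- x 1 = 0
  have hx1 : x 1 = 0 := by
    have : nabla x 1 = x 1 - x 0 := by rw [nabla]; norm_num
    rw [this, h0, sub_zero] at h1
    exact h1
  -- caputo values of x
  have capX : ∀ N : ℕ, caputo 0.6 0 x ((N:ℤ)+1) = (N:ℝ)*((N:ℝ)+1)/2 := by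
    intro N
    induction N with
    | zero =>
      have h := caputoK x 1
      rw [Finset.sum_range_one, show ((1:ℕ):ℤ) = ((0:ℕ):ℤ)+1 by norm_num] at h
      rw [h, show (1-1-0 : ℕ) = 0 by norm_num, K_zero, one_mul,
        show (((0:ℕ)):ℤ)+1 = (1:ℤ) by norm_num, h1]
      norm_num
    | succ N ih =>
      have h := heq ((N:ℤ)+1) (by omega)
      rw [show (((N+1:ℕ)):ℤ)+1 = ((N:ℤ)+1)+1 by push_cast; ring]
      have : caputo 0.6 0 x ((N:ℤ)+1+1) = caputo 0.6 0 x ((N:ℤ)+1) + (((N:ℤ)+1 : ℤ) : ℝ) := by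
        linarith [h]
      rw [this, ih]
      push_cast
      ring
  -- main claim
  have claim : ∀ N : ℕ, ∀ s : ℕ, s ≤ N → x (s:ℤ) = Y (s:ℤ) := by
    intro N
    induction N with
    | zero =>
      intro s hs
      rw [Nat.le_zero.mp hs]
      rw [show ((0:ℕ):ℤ) = 0 by norm_num, h0, Y0]
    | succ N ih =>
      intro s hs
      rcases Nat.lt_or_ge s (N+1) with h | h
      · exact ih s (by omega)
      · have hsN : s = N + 1 := by omega
        subst hsN
        match N with
        | 0 =>
          rw [show ((0+1:ℕ):ℤ) = 1 by norm_num, hx1, Y1]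
        | (M+1) =>
          -- s = M + 2
          have e1 : caputo 0.6 0 x ((M:ℤ)+2) = caputo 0.6 0 Y ((M:ℤ)+2) := by
            have hx := capX (M+1)
            rw [show (((M+1:ℕ)):ℤ)+1 = (M:ℤ)+2 by push_cast; ring] at hx
            rw [hx, capY M]
            push_cast
            ring
          have hcx := caputoK x (M+2)
          have hcy := caputoK Y (M+2)
          rw [show (((M+2:ℕ)):ℤ) = (M:ℤ)+2 by push_cast; ring] at hcx hcy
          have lx := Finset.sum_range_succ
            (fun j => K 0.4 (M+2-1-j) * nabla x ((j:ℤ)+1)) (M+1)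
          have ly := Finset.sum_range_succ
            (fun j => K 0.4 (M+2-1-j) * nabla Y ((j:ℤ)+1)) (M+1)
          rw [hcx, hcy, lx, ly] at e1
          have esum : ∑ j ∈ range (M+1), K 0.4 (M+2-1-j) * nabla x ((j:ℤ)+1)
              = ∑ j ∈ range (M+1), K 0.4 (M+2-1-j) * nabla Y ((j:ℤ)+1) := by
            apply Finset.sum_congr rfl
            intro j hj
            have hj' : j ≤ M := by simpa [Nat.lt_succ_iff] using hj
            have hnab : nabla x ((j:ℤ)+1) = nabla Y ((j:ℤ)+1) := by
              rw [nabla, nabla, show ((j:ℤ)+1-1 : ℤ) = (j:ℤ) by ring]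
              have e2 : x ((j:ℤ)+1) = Y ((j:ℤ)+1) := by
                have := ih (j+1) (by omega)
                rwa [show (((j+1:ℕ)):ℤ) = (j:ℤ)+1 by push_cast; ring] at this
              have e3 : x (j:ℤ) = Y (j:ℤ) := ih j (by omega)
              rw [e2, e3]
            rw [hnab]
          rw [esum] at e1
          have e4' := add_left_cancel e1
          have e4 : nabla x (((M+1:ℕ):ℤ)+1) = nabla Y (((M+1:ℕ):ℤ)+1) := by
            have hK : K 0.4 (M+2-1-(M+1)) = 1 := by
              rw [show M+2-1-(M+1) = 0 by omega, K_zero]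
            rw [hK, one_mul, one_mul] at e4'
            exact e4'
          have e5 : x ((M:ℤ)+2) - x ((M:ℤ)+1) = Y ((M:ℤ)+2) - Y ((M:ℤ)+1) := by
            have : (((M+1:ℕ)):ℤ)+1 = (M:ℤ)+2 := by push_cast; ring
            rw [this] at e4
            rw [nabla, nabla, show ((M:ℤ)+2-1 : ℤ) = (M:ℤ)+1 by ring] at e4
            exact e4
          have e6 : x ((M:ℤ)+1) = Y ((M:ℤ)+1) := by
            have := ih (M+1) (by omega)
            rwa [show (((M+1:ℕ)):ℤ) = (M:ℤ)+1 by push_cast; ring] at this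
          have : x ((M:ℤ)+2) = Y ((M:ℤ)+2) := by linarith [e5, e6]
          rwa [show (((M+1+1:ℕ)):ℤ) = (M:ℤ)+2 by push_cast; ring]
  intro t ht
  lift t to ℕ using ht with N
  exact claim N N le_rfl
end
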